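/- arXiv:2004.00177 — 3 statements merged into one kernel-verified Lean document; each statement's English description precedes it below -/
import Mathlib

section
/- If φ is a proper probability distribution function on ℝ and u ∈ ℝ is a constant such that the function f(x,t) = φ(x − u·t) is a mean-field model, then necessarily u = v; that is, the speed of any traveling-wave mean-field model equals v. -/
open MeasureTheory Filter Topology

noncomputable section

/-- A proper probability distribution function on `ℝ`: nondecreasing, right-continuous,
with limit `0` at `-∞` and limit `1` at `+∞`. -/
def IsPDF (F : ℝ → ℝ) : Prop :=
  Monotone F ∧ (∀ x, ContinuousWithinAt F (Set.Ici x) x) ∧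
    Tendsto F atBot (𝓝 0) ∧ Tendsto F atTop (𝓝 1)

/-- The Lebesgue–Stieltjes measure of `F` (zero if `F` is not monotone right-continuous). -/
def lsMeasure (F : ℝ → ℝ) : Measure ℝ := by
  classical
  exact if h : Monotone F ∧ ∀ x, ContinuousWithinAt F (Set.Ici x) x then
    StieltjesFunction.measure ⟨F, h.1, h.2⟩
  else 0

/-- `η̄(y, γ)`: equals `η (γ y)` if `γ` is continuous at `y`, and otherwise the average of
`η` over the interval `[γ(y-), γ(y)]`. -/
def etaBar (η γ : ℝ → ℝ) (y : ℝ) : ℝ := by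
  classical
  exact if ContinuousAt γ y then η (γ y)
  else (γ y - Function.leftLim γ y)⁻¹ * ∫ ν in Function.leftLim γ y..γ y, η ν

/-- A mean-field model for rate `μ`, jump-rate function `η` and jump-size CDF `J`:
(a) for each `t ≥ 0`, `f (·, t)` is a proper probability distribution function;
(b) for each `x`, `f (x, ·)` is nonincreasing and `c`-Lipschitz on `[0,∞)`, `c` independent of `x`;
(c) wherever the partial `t`-derivative exists it equals
`-μ ∫_{(-∞,x]} η̄(y, f(·,t)) (1 - J(x-y)) d_y f(y,t)`. -/
structure IsMFM (μ : ℝ) (η J : ℝ → ℝ) (f : ℝ → ℝ → ℝ) : Prop where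
  pdf : ∀ t : ℝ, 0 ≤ t → IsPDF (fun x => f x t)
  anti : ∀ x : ℝ, AntitoneOn (f x) (Set.Ici 0)
  lip : ∃ c : NNReal, ∀ x : ℝ, LipschitzOnWith c (f x) (Set.Ici 0)
  deriv_eq : ∀ x t : ℝ, 0 ≤ t → ∀ d : ℝ,
    HasDerivWithinAt (f x) d (Set.Ici 0) t →
    d = -μ * ∫ y in Set.Iic x,
      etaBar η (fun z => f z t) y * (1 - J (x - y)) ∂(lsMeasure (fun z => f z t))

open Set
open scoped ENNReal NNReal

/-- A function agreeing with a measurable function off a countable set is measurable. -/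
lemma measurable_of_off_countable {f g : ℝ → ℝ} {S : Set ℝ} (hS : S.Countable)
    (hg : Measurable g) (h : ∀ y ∉ S, f y = g y) : Measurable f := by
  intro A hA
  have hset : f ⁻¹' A = (S ∩ f ⁻¹' A) ∪ (Sᶜ ∩ g ⁻¹' A) := by
    ext y
    by_cases hy : y ∈ S
    · simp [hy]
    · simp [hy, h y hy]
  rw [hset]
  exact ((hS.mono inter_subset_left).measurableSet).union
    ((hS.measurableSet.compl).inter (hg hA))

/-- Tonelli computation for the double integral appearing in the mean-field model. -/
lemma tonelli_key (J h : ℝ → ℝ) (hJm : Measurable J) (hm : Measurable h)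
    (ν : Measure ℝ) [SFinite ν] :
    ∫⁻ x, (∫⁻ y in Set.Iic x, ENNReal.ofReal (h y) * ENNReal.ofReal (1 - J (x - y)) ∂ν)
      = (∫⁻ y, ENNReal.ofReal (h y) ∂ν) * ∫⁻ s in Set.Ioi (0:ℝ), ENNReal.ofReal (1 - J s) := by
  have hg : Measurable fun s => ENNReal.ofReal (1 - J s) :=
    ENNReal.measurable_ofReal.comp (measurable_const.sub hJm)
  set H : ℝ → ℝ≥0∞ := (Set.Ici (0:ℝ)).indicator fun s => ENNReal.ofReal (1 - J s) with hH
  have hHm : Measurable H := hg.indicator measurableSet_Ici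
  have step1 : ∀ x, (∫⁻ y in Set.Iic x, ENNReal.ofReal (h y) * ENNReal.ofReal (1 - J (x - y)) ∂ν)
      = ∫⁻ y, ENNReal.ofReal (h y) * H (x - y) ∂ν := by
    intro x
    rw [← lintegral_indicator measurableSet_Iic]
    apply lintegral_congr
    intro y
    by_cases hy : y ≤ x
    · rw [Set.indicator_of_mem (Set.mem_Iic.2 hy), hH,
        Set.indicator_of_mem (Set.mem_Ici.2 (by linarith))]
    · rw [Set.indicator_of_notMem (by simpa using hy), hH,
        Set.indicator_of_notMem (by simp only [Set.mem_Ici, not_le]; linarith)]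
      simp
  have step2 : ∫⁻ x, ∫⁻ y, ENNReal.ofReal (h y) * H (x - y) ∂ν
      = ∫⁻ y, (∫⁻ x, ENNReal.ofReal (h y) * H (x - y)) ∂ν := by
    apply lintegral_lintegral_swap
    have huncurry : Function.uncurry (fun x y => ENNReal.ofReal (h y) * H (x - y))
        = fun p : ℝ × ℝ => ENNReal.ofReal (h p.2) * H (p.1 - p.2) := rfl
    rw [huncurry]
    exact ((ENNReal.measurable_ofReal.comp (hm.comp measurable_snd)).mul
      (hHm.comp (measurable_fst.sub measurable_snd))).aemeasurable
  have step3 : ∀ y : ℝ, (∫⁻ x, ENNReal.ofReal (h y) * H (x - y))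
      = ENNReal.ofReal (h y) * ∫⁻ s in Set.Ioi (0:ℝ), ENNReal.ofReal (1 - J s) := by
    intro y
    rw [lintegral_const_mul' _ _ ENNReal.ofReal_ne_top]
    congr 1
    have h1 : (∫⁻ x, H (x - y)) = ∫⁻ x, H x := by
      simpa [sub_eq_add_neg] using lintegral_add_right_eq_self H (-y)
    rw [h1, hH, lintegral_indicator measurableSet_Ici,
      ← Measure.restrict_congr_set (Ioi_ae_eq_Ici (a := (0:ℝ)))]
  rw [lintegral_congr step1, step2, lintegral_congr step3,
    lintegral_mul_const _ hm.ennreal_ofReal]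

/-- If `φ` is a proper probability distribution function and
`f(x,t) = φ(x − u·t)` is a mean-field model, then necessarily `u = v`. -/
theorem traveling_wave_speed_eq_v
    (η : ℝ → ℝ) (hη_cont : ContinuousOn η (Set.Icc 0 1))
    (hη_anti : StrictAntiOn η (Set.Icc 0 1)) (hη0 : η 0 = 1) (hη1 : η 1 = 0)
    (J : ℝ → ℝ) (hJ : IsPDF J) (hJneg : ∀ y : ℝ, y < 0 → J y = 0)
    (hm1 : Integrable (fun y : ℝ => y) (lsMeasure J))
    (μ v : ℝ) (hμ : 0 < μ)
    (hv : v = μ * (∫ y, y ∂(lsMeasure J)) * ∫ ν in (0:ℝ)..1, η ν)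
    (φ : ℝ → ℝ) (hφ : IsPDF φ) (u : ℝ)
    (hmfm : IsMFM μ η J (fun x t => φ (x - u * t))) :
    u = v := by
  classical
  obtain ⟨hφm, hφrc, hφbot, hφtop⟩ := hφ
  obtain ⟨hJm, hJrc, hJbot, hJtop⟩ := hJ
  set φsf : StieltjesFunction ℝ := ⟨φ, hφm, hφrc⟩ with hφsf
  set Jsf : StieltjesFunction ℝ := ⟨J, hJm, hJrc⟩ with hJsf
  have hcoeφ : ⇑φsf = φ := rfl
  have hcoeJ : ⇑Jsf = J := rfl
  set ν : Measure ℝ := φsf.measure with hν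
  set νJ : Measure ℝ := Jsf.measure with hνJ
  have hlsφ : lsMeasure φ = ν := by
    unfold lsMeasure
    rw [dif_pos (⟨hφm, hφrc⟩ : Monotone φ ∧ ∀ x, ContinuousWithinAt φ (Set.Ici x) x)]
  have hlsJ : lsMeasure J = νJ := by
    unfold lsMeasure
    rw [dif_pos (⟨hJm, hJrc⟩ : Monotone J ∧ ∀ x, ContinuousWithinAt J (Set.Ici x) x)]
  -- pointwise bounds
  have hφ0 : ∀ y, 0 ≤ φ y := fun y =>
    le_of_tendsto hφbot (eventually_atBot.2 ⟨y, fun z hz => hφm hz⟩)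
  have hφ1 : ∀ y, φ y ≤ 1 := fun y =>
    ge_of_tendsto hφtop (eventually_atTop.2 ⟨y, fun z hz => hφm hz⟩)
  have hJ0 : ∀ y, 0 ≤ J y := fun y =>
    le_of_tendsto hJbot (eventually_atBot.2 ⟨y, fun z hz => hJm hz⟩)
  have hJ1 : ∀ y, J y ≤ 1 := fun y =>
    ge_of_tendsto hJtop (eventually_atTop.2 ⟨y, fun z hz => hJm hz⟩)
  -- η bounds
  have hη_nonneg : ∀ x ∈ Set.Icc (0:ℝ) 1, 0 ≤ η x := by
    intro x hx
    rcases eq_or_lt_of_le hx.2 with h | h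
    · rw [h, hη1]
    · have := hη_anti hx (⟨zero_le_one, le_rfl⟩ : (1:ℝ) ∈ Set.Icc (0:ℝ) 1) h
      rw [hη1] at this
      exact this.le
  have hη_le1 : ∀ x ∈ Set.Icc (0:ℝ) 1, η x ≤ 1 := by
    intro x hx
    rcases eq_or_lt_of_le hx.1 with h | h
    · rw [← h, hη0]
    · have := hη_anti (⟨le_rfl, zero_le_one⟩ : (0:ℝ) ∈ Set.Icc (0:ℝ) 1) hx h
      rw [hη0] at this
      exact this.le
  -- clamped version of η
  set η' : ℝ → ℝ := fun x => η (min 1 (max 0 x)) with hη'def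
  have hclamp : ∀ x : ℝ, min 1 (max 0 x) ∈ Set.Icc (0:ℝ) 1 := fun x =>
    ⟨le_min zero_le_one (le_max_left 0 x), min_le_left 1 _⟩
  have hη'eq : ∀ x ∈ Set.Icc (0:ℝ) 1, η' x = η x := by
    intro x hx
    simp only [hη'def]
    rw [max_eq_right hx.1, min_eq_right hx.2]
  have hη'cont : Continuous η' :=
    hη_cont.comp_continuous (continuous_const.min (continuous_const.max continuous_id)) hclamp
  -- interval integral positivity
  have hintpos : ∀ a b : ℝ, 0 ≤ a → a < b → b ≤ 1 → 0 < ∫ x in a..b, η x := by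
    intro a b ha hab hb1
    apply intervalIntegral.intervalIntegral_pos_of_pos_on
    · apply ContinuousOn.intervalIntegrable
      apply hη_cont.mono
      rw [uIcc_of_le hab.le]
      exact Icc_subset_Icc ha hb1
    · intro x hx
      have hx01 : x ∈ Set.Icc (0:ℝ) 1 := ⟨ha.trans hx.1.le, (hx.2.trans_le hb1).le⟩
      have h2 : η 1 < η x := hη_anti hx01 ⟨zero_le_one, le_rfl⟩ (lt_of_lt_of_le hx.2 hb1)
      rw [hη1] at h2
      exact h2
    · exact hab
  -- leftLim facts
  have hll_le : ∀ y, Function.leftLim φ y ≤ φ y := fun y => hφm.leftLim_le le_rfl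
  have hll0 : ∀ y, 0 ≤ Function.leftLim φ y := fun y =>
    (hφ0 (y - 1)).trans (hφm.le_leftLim (by linarith))
  have hrl : ∀ y, Function.rightLim φ y = φ y := fun y =>
    hφm.continuousWithinAt_Ioi_iff_rightLim_eq.1 ((hφrc y).mono Ioi_subset_Ici_self)
  have hcont_iff : ∀ y, ContinuousAt φ y ↔ Function.leftLim φ y = φ y := by
    intro y
    rw [hφm.continuousAt_iff_leftLim_eq_rightLim, hrl y]
  have hjump_lt : ∀ y, ¬ ContinuousAt φ y → Function.leftLim φ y < φ y := by
    intro y hy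
    rcases lt_or_eq_of_le (hll_le y) with h | h
    · exact h
    · exact absurd ((hcont_iff y).2 h) hy
  -- etaBar facts
  have hEB_eq_cont : ∀ y, ContinuousAt φ y → etaBar η φ y = η (φ y) := by
    intro y hy
    unfold etaBar
    rw [if_pos hy]
  have hEB_jump : ∀ y, ¬ ContinuousAt φ y →
      etaBar η φ y = (φ y - Function.leftLim φ y)⁻¹ * ∫ s in Function.leftLim φ y..φ y, η s := by
    intro y hy
    unfold etaBar
    rw [if_neg hy]
  have hEB_mem : ∀ y, etaBar η φ y ∈ Set.Icc (0:ℝ) 1 := by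
    intro y
    by_cases hy : ContinuousAt φ y
    · rw [hEB_eq_cont y hy]
      exact ⟨hη_nonneg _ ⟨hφ0 y, hφ1 y⟩, hη_le1 _ ⟨hφ0 y, hφ1 y⟩⟩
    · rw [hEB_jump y hy]
      have hab : Function.leftLim φ y < φ y := hjump_lt y hy
      have hInt : IntervalIntegrable η volume (Function.leftLim φ y) (φ y) := by
        apply ContinuousOn.intervalIntegrable
        apply hη_cont.mono
        rw [uIcc_of_le hab.le]
        exact Icc_subset_Icc (hll0 y) (hφ1 y)
      constructor
      · refine mul_nonneg (inv_nonneg.2 (sub_nonneg.2 hab.le)) ?_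
        exact intervalIntegral.integral_nonneg hab.le
          (fun s hs => hη_nonneg s ⟨(hll0 y).trans hs.1, hs.2.trans (hφ1 y)⟩)
      · have h2 : (∫ s in Function.leftLim φ y..φ y, η s)
            ≤ ∫ s in Function.leftLim φ y..φ y, (1:ℝ) := by
          apply intervalIntegral.integral_mono_on hab.le hInt intervalIntegrable_const
          intro s hs
          exact hη_le1 s ⟨(hll0 y).trans hs.1, hs.2.trans (hφ1 y)⟩
        rw [intervalIntegral.integral_const, smul_eq_mul, mul_one] at h2
        calc (φ y - Function.leftLim φ y)⁻¹ * ∫ s in Function.leftLim φ y..φ y, η s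
            ≤ (φ y - Function.leftLim φ y)⁻¹ * (φ y - Function.leftLim φ y) :=
              mul_le_mul_of_nonneg_left h2 (inv_nonneg.2 (sub_nonneg.2 hab.le))
          _ = 1 := inv_mul_cancel₀ (sub_ne_zero.2 hab.ne')
  have hEB_pos_of_jump : ∀ y, ¬ ContinuousAt φ y → 0 < etaBar η φ y := by
    intro y hy
    rw [hEB_jump y hy]
    have hab := hjump_lt y hy
    exact mul_pos (inv_pos.2 (sub_pos.2 hab)) (hintpos _ _ (hll0 y) hab (hφ1 y))
  have hEB_pos_of_lt : ∀ y, φ y < 1 → 0 < etaBar η φ y := by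
    intro y hy
    by_cases hc : ContinuousAt φ y
    · rw [hEB_eq_cont y hc]
      have h2 := hη_anti ⟨hφ0 y, hφ1 y⟩ ⟨zero_le_one, le_rfl⟩ hy
      rw [hη1] at h2
      exact h2
    · exact hEB_pos_of_jump y hc
  have hEBmble : Measurable (etaBar η φ) := by
    apply measurable_of_off_countable hφm.countable_not_continuousAt
      (hη'cont.measurable.comp hφm.measurable)
    intro y hy
    simp only [Set.mem_setOf_eq, not_not] at hy
    rw [hEB_eq_cont y hy]
    exact (hη'eq _ ⟨hφ0 y, hφ1 y⟩).symm
  -- measure facts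
  have hνIic : ∀ x, ν (Set.Iic x) = ENNReal.ofReal (φ x) := by
    intro x
    rw [hν, φsf.measure_Iic hφbot, hcoeφ, sub_zero]
  have hνuniv : ν Set.univ = 1 := by
    rw [hν, φsf.measure_univ hφbot hφtop]
    norm_num
  haveI hprob : IsProbabilityMeasure ν := ⟨hνuniv⟩
  -- the key pointwise identity at t = 0
  have hfun0 : (fun z => φ (z - u * 0)) = φ := by
    funext z
    norm_num
  have hG : ∀ x d, HasDerivAt φ d x →
      u * d = μ * ∫ y in Set.Iic x, etaBar η φ y * (1 - J (x - y)) ∂ν := by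
    intro x d hd
    have hlin : HasDerivAt (fun t : ℝ => x - u * t) (-u) 0 := by
      simpa using ((hasDerivAt_id (0:ℝ)).const_mul u).const_sub x
    have hd' : HasDerivAt φ d (x - u * 0) := by
      rw [mul_zero, sub_zero]
      exact hd
    have hcomp : HasDerivAt (fun t : ℝ => φ (x - u * t)) (d * -u) 0 := hd'.comp 0 hlin
    have heq := hmfm.deriv_eq x 0 le_rfl (d * -u) hcomp.hasDerivWithinAt
    simp only [hfun0] at heq
    rw [hlsφ] at heq
    linear_combination -heq
  -- integrability of the integrand
  have hJmble : Measurable J := hJm.measurable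
  have hImble : ∀ x, Measurable fun y => etaBar η φ y * (1 - J (x - y)) := fun x =>
    hEBmble.mul (measurable_const.sub (hJmble.comp (measurable_const.sub measurable_id)))
  have hInn : ∀ x y, 0 ≤ etaBar η φ y * (1 - J (x - y)) := fun x y =>
    mul_nonneg (hEB_mem y).1 (by linarith [hJ1 (x - y)])
  have hIle : ∀ x y, etaBar η φ y * (1 - J (x - y)) ≤ 1 := by
    intro x y
    have h1 := (hEB_mem y).1
    have h2 := (hEB_mem y).2
    have h3 := hJ0 (x - y)
    have h4 := hJ1 (x - y)
    nlinarith
  have hInt : ∀ x, Integrable (fun y => etaBar η φ y * (1 - J (x - y)))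
      (ν.restrict (Set.Iic x)) := by
    intro x
    refine (integrable_const (1:ℝ)).mono' ((hImble x).aestronglyMeasurable) ?_
    filter_upwards with y
    rw [Real.norm_eq_abs, abs_of_nonneg (hInn x y)]
    exact hIle x y
  have hGof : ∀ x, ENNReal.ofReal (∫ y in Set.Iic x, etaBar η φ y * (1 - J (x - y)) ∂ν)
      = ∫⁻ y in Set.Iic x,
          ENNReal.ofReal (etaBar η φ y) * ENNReal.ofReal (1 - J (x - y)) ∂ν := by
    intro x
    rw [MeasureTheory.ofReal_integral_eq_lintegral_ofReal (hInt x)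
      (Filter.Eventually.of_forall fun y => hInn x y)]
    exact lintegral_congr fun y => ENNReal.ofReal_mul (hEB_mem y).1
  -- the first moment of J via layer cake
  have hllJ0 : Function.leftLim J 0 = 0 := by
    apply leftLim_eq_of_tendsto
    apply Tendsto.congr' _ tendsto_const_nhds
    filter_upwards [self_mem_nhdsWithin] with z hz
    exact (hJneg z hz).symm
  have hνJuniv : νJ Set.univ = 1 := by
    rw [hνJ, Jsf.measure_univ hJbot hJtop]
    norm_num
  have hνJIci : νJ (Set.Ici 0) = 1 := by
    rw [hνJ, Jsf.measure_Ici hJtop, hcoeJ, hllJ0]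
    norm_num
  have hνJIio : νJ (Set.Iio 0) = 0 := by
    have h := measure_add_measure_compl (μ := νJ) (measurableSet_Ici (a := (0:ℝ)))
    rw [hνJIci, hνJuniv, compl_Ici] at h
    nth_rewrite 2 [← add_zero (1 : ℝ≥0∞)] at h
    exact (ENNReal.add_right_inj ENNReal.one_ne_top).1 h
  have hae_nonneg : ∀ᵐ y ∂νJ, (0:ℝ) ≤ y := by
    rw [ae_iff]
    have hs : {y : ℝ | ¬ (0:ℝ) ≤ y} = Set.Iio 0 := by
      ext y
      simp
    rw [hs]
    exact hνJIio
  have hνJIoi : ∀ t : ℝ, νJ (Set.Ioi t) = ENNReal.ofReal (1 - J t) := by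
    intro t
    have h := measure_add_measure_compl (μ := νJ) (measurableSet_Iic (a := t))
    rw [hνJuniv, compl_Iic, hνJ, Jsf.measure_Iic hJbot, hcoeJ, sub_zero] at h
    have h2 : ENNReal.ofReal (J t) + ENNReal.ofReal (1 - J t) = 1 := by
      rw [← ENNReal.ofReal_add (hJ0 t) (by linarith [hJ1 t])]
      norm_num
    rw [← h2] at h
    exact (ENNReal.add_right_inj ENNReal.ofReal_ne_top).1 h
  set M : ℝ≥0∞ := ∫⁻ s in Set.Ioi (0:ℝ), ENNReal.ofReal (1 - J s) with hMdef
  have hM : M = ∫⁻ y, ENNReal.ofReal y ∂νJ := by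
    rw [hMdef, MeasureTheory.lintegral_eq_lintegral_meas_lt νJ hae_nonneg aemeasurable_id]
    apply setLIntegral_congr_fun measurableSet_Ioi
    intro t ht
    have : {a : ℝ | t < a} = Set.Ioi t := rfl
    show ENNReal.ofReal (1 - J t) = νJ {a | t < a}
    rw [this, hνJIoi t]
  have hMne : M ≠ ⊤ := by
    rw [hM]
    have hle : (∫⁻ y, ENNReal.ofReal y ∂νJ) ≤ ∫⁻ y, ‖y‖ₑ ∂νJ :=
      lintegral_mono fun y => Real.ofReal_le_enorm y
    have hfin : (∫⁻ y, ‖y‖ₑ ∂νJ) < ⊤ := by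
      have := hm1
      rw [hlsJ] at this
      exact this.2
    exact (lt_of_le_of_lt hle hfin).ne
  have hm1val : (∫ y, y ∂(lsMeasure J)) = M.toReal := by
    rw [hlsJ, MeasureTheory.integral_eq_lintegral_of_nonneg_ae hae_nonneg
      aestronglyMeasurable_id, ← hM]
  -- main case analysis on the sign of u
  rcases lt_trichotomy u 0 with hu | hu | hu
  · -- u < 0 is impossible
    exfalso
    have hconst : ∀ x s : ℝ, 0 ≤ s → φ (x - u * s) = φ x := by
      intro x s hs
      have h1 : φ (x - u * s) ≤ φ (x - u * 0) :=
        hmfm.anti x (Set.mem_Ici.2 le_rfl) (Set.mem_Ici.2 hs) hs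
      rw [mul_zero, sub_zero] at h1
      have h2 : φ x ≤ φ (x - u * s) := hφm (by nlinarith)
      exact le_antisymm h1 h2
    have hconst2 : ∀ a b : ℝ, a ≤ b → φ b = φ a := by
      intro a b hab
      have hs : 0 ≤ (a - b) / u := by
        rw [div_nonneg_iff]
        right
        constructor <;> linarith
      have h := hconst a ((a - b) / u) hs
      rw [show a - u * ((a - b) / u) = b by field_simp [hu.ne]; ring] at h
      exact h
    have hc1 : Tendsto φ atTop (𝓝 (φ 0)) := by
      apply Tendsto.congr' _ tendsto_const_nhds
      filter_upwards [eventually_ge_atTop (0:ℝ)] with b hb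
      exact (hconst2 0 b hb).symm
    have hc2 : Tendsto φ atBot (𝓝 (φ 0)) := by
      apply Tendsto.congr' _ tendsto_const_nhds
      filter_upwards [eventually_le_atBot (0:ℝ)] with b hb
      exact hconst2 b 0 hb
    have e1 : φ 0 = 1 := tendsto_nhds_unique hc1 hφtop
    have e2 : φ 0 = 0 := tendsto_nhds_unique hc2 hφbot
    rw [e1] at e2
    norm_num at e2
  · -- u = 0 : we show v = 0
    have hGzero : ∀ x, (∫ y in Set.Iic x, etaBar η φ y * (1 - J (x - y)) ∂ν) = 0 := by
      intro x
      have hder : HasDerivWithinAt (fun t : ℝ => φ (x - u * t)) 0 (Set.Ici 0) 0 := by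
        simp only [hu, zero_mul, sub_zero]
        exact hasDerivWithinAt_const _ _ _
      have h := hmfm.deriv_eq x 0 le_rfl 0 hder
      simp only [hfun0] at h
      rw [hlsφ] at h
      have hne : -μ ≠ 0 := neg_ne_zero.2 hμ.ne'
      exact (mul_eq_zero.1 h.symm).resolve_left hne
    have hLzero : (∫⁻ y, ENNReal.ofReal (etaBar η φ y) ∂ν) * M = 0 := by
      rw [hMdef, ← tonelli_key J (etaBar η φ) hJmble hEBmble ν]
      have hz : ∀ x, (∫⁻ y in Set.Iic x,
          ENNReal.ofReal (etaBar η φ y) * ENNReal.ofReal (1 - J (x - y)) ∂ν) = 0 := by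
        intro x
        rw [← hGof x, hGzero x]
        simp
      simp [hz]
    have hIpos : (∫⁻ y, ENNReal.ofReal (etaBar η φ y) ∂ν) ≠ 0 := by
      intro h0
      have hae := (lintegral_eq_zero_iff hEBmble.ennreal_ofReal).1 h0
      rw [Filter.EventuallyEq, ae_iff] at hae
      have hNnull : ν {y | 0 < etaBar η φ y} = 0 := by
        refine measure_mono_null ?_ hae
        intro y hy
        simp only [Set.mem_setOf_eq] at hy
        simp only [Set.mem_setOf_eq, Pi.zero_apply, ENNReal.ofReal_eq_zero, not_le]
        exact hy
      by_cases hT : ∀ y, φ y < 1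
      · have hsub : (Set.univ : Set ℝ) ⊆ {y | 0 < etaBar η φ y} :=
          fun y _ => hEB_pos_of_lt y (hT y)
        have h1 : ν Set.univ = 0 := measure_mono_null hsub hNnull
        rw [hνuniv] at h1
        exact one_ne_zero h1
      · push_neg at hT
        obtain ⟨y₀, hy₀⟩ := hT
        obtain ⟨y₁, hy₁⟩ : ∃ y₁, φ y₁ < 1 :=
          (Filter.Tendsto.eventually_lt_const (by norm_num : (0:ℝ) < 1) hφbot).exists
        set T := {y : ℝ | 1 ≤ φ y} with hTdef
        have hTne : T.Nonempty := ⟨y₀, hy₀⟩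
        have hlb : ∀ t ∈ T, y₁ ≤ t := by
          intro t ht
          by_contra hlt
          push_neg at hlt
          have h2 : φ t ≤ φ y₁ := hφm hlt.le
          have h3 : (1:ℝ) ≤ φ y₁ := le_trans ht h2
          linarith
        have hTbdd : BddBelow T := ⟨y₁, hlb⟩
        set a := sInf T with ha
        have hφgt : ∀ x, a < x → φ x = 1 := by
          intro x hx
          obtain ⟨t, htT, htx⟩ := (csInf_lt_iff hTbdd hTne).1 hx
          exact le_antisymm (hφ1 x) (le_trans htT (hφm htx.le))
        have hφa : φ a = 1 := by
          have h1 : Tendsto φ (𝓝[>] a) (𝓝 (φ a)) := (hφrc a).mono Ioi_subset_Ici_self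
          have h2 : Tendsto φ (𝓝[>] a) (𝓝 1) := by
            apply Tendsto.congr' _ tendsto_const_nhds
            filter_upwards [self_mem_nhdsWithin] with x hx
            exact (hφgt x hx).symm
          exact tendsto_nhds_unique h1 h2
        have hlle : Function.leftLim φ a ≤ 1 := by
          rw [← hφa]
          exact hll_le a
        rcases lt_or_eq_of_le hlle with hla | hla
        · -- jump at a
          have hnc : ¬ ContinuousAt φ a := by
            intro hc
            have h4 := (hcont_iff a).1 hc
            rw [hφa] at h4
            exact absurd h4 (ne_of_lt hla)
          have hpos := hEB_pos_of_jump a hnc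
          have h1 : ν {a} = 0 := by
            apply measure_mono_null _ hNnull
            intro z hz
            rw [Set.mem_singleton_iff] at hz
            subst hz
            exact hpos
          rw [hν, φsf.measure_singleton, hcoeφ, ENNReal.ofReal_eq_zero, hφa] at h1
          linarith
        · -- leftLim φ a = 1
          have hsub : Set.Iio a ⊆ {y | 0 < etaBar η φ y} := by
            intro y hy
            apply hEB_pos_of_lt
            by_contra hge
            push_neg at hge
            exact absurd (csInf_le hTbdd hge) (not_le.2 hy)
          have h1 : ν (Set.Iio a) = 0 := measure_mono_null hsub hNnull
          have h2 : ν (Set.Iio a) = 1 := by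
            have h := measure_add_measure_compl (μ := ν) (measurableSet_Ici (a := a))
            rw [hνuniv, compl_Ici, hν, φsf.measure_Ici hφtop, hcoeφ, hla] at h
            simpa using h
          rw [h1] at h2
          exact zero_ne_one h2
    have hMzero : M = 0 := by
      rcases mul_eq_zero.1 hLzero with h | h
      · exact absurd h hIpos
      · exact h
    have hm1zero : (∫ y, y ∂(lsMeasure J)) = 0 := by
      rw [hm1val, hMzero]
      simp
    rw [hu, hv, hm1zero]
    ring
  · -- u > 0 : the traveling-wave computation
    obtain ⟨c, hc⟩ := hmfm.lip
    have hKbd : ∀ a b : ℝ, a ≤ b → φ b - φ a ≤ (c / u) * (b - a) := by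
      intro a b hab
      have h0 : (0:ℝ) ≤ (b - a) / u := div_nonneg (by linarith) hu.le
      have h := (hc b).dist_le_mul ((b - a) / u) (Set.mem_Ici.2 h0) 0 (Set.mem_Ici.2 le_rfl)
      rw [show b - u * ((b - a) / u) = a by field_simp [hu.ne']; ring] at h
      rw [mul_zero, sub_zero, Real.dist_eq, Real.dist_eq, sub_zero] at h
      rw [abs_of_nonpos (by linarith [hφm hab] : φ a - φ b ≤ 0), abs_of_nonneg h0] at h
      calc φ b - φ a = -(φ a - φ b) := by ring
        _ ≤ c * ((b - a) / u) := h
        _ = (c / u) * (b - a) := by ring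
    set K : ℝ≥0 := Real.toNNReal ((c:ℝ) / u) with hKdef
    have hKcoe : (K : ℝ) = (c:ℝ) / u := Real.coe_toNNReal _ (div_nonneg c.2 hu.le)
    have hLip : LipschitzWith K φ := by
      rw [lipschitzWith_iff_dist_le_mul]
      have key : ∀ x y : ℝ, x ≤ y → dist (φ x) (φ y) ≤ K * dist x y := by
        intro x y hxy
        rw [Real.dist_eq, Real.dist_eq, abs_sub_comm (φ x), abs_sub_comm x,
          abs_of_nonneg (by linarith [hφm hxy] : (0:ℝ) ≤ φ y - φ x),
          abs_of_nonneg (by linarith : (0:ℝ) ≤ y - x), hKcoe]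
        exact hKbd x y hxy
      intro x y
      rcases le_total x y with hxy | hxy
      · exact key x y hxy
      · rw [dist_comm (φ x), dist_comm x]
        exact key y x hxy
    have hφcont : Continuous φ := hLip.continuous
    have hEB' : ∀ y, etaBar η φ y = η' (φ y) := by
      intro y
      rw [hEB_eq_cont y hφcont.continuousAt]
      exact (hη'eq _ ⟨hφ0 y, hφ1 y⟩).symm
    -- absolute continuity of ν
    have hgmono : Monotone (fun x => (K:ℝ) * x - φ x) := by
      intro x y hxy
      have h := hKbd x y hxy
      rw [hKcoe]
      simp only
      nlinarith [hKbd x y hxy]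
    have hgcont : Continuous (fun x => (K:ℝ) * x - φ x) :=
      (continuous_const.mul continuous_id).sub hφcont
    set g : StieltjesFunction ℝ :=
      ⟨fun x => (K:ℝ) * x - φ x, hgmono, fun x => hgcont.continuousAt.continuousWithinAt⟩
      with hgdef
    have hsum : ν + g.measure = (K : ℝ≥0∞) • (volume : Measure ℝ) := by
      apply MeasureTheory.Measure.ext_of_Ioc' _ _ ?fin
      case fin =>
        intro a b hab
        rw [Measure.add_apply, hν, φsf.measure_Ioc, g.measure_Ioc]
        exact ENNReal.add_ne_top.2 ⟨ENNReal.ofReal_ne_top, ENNReal.ofReal_ne_top⟩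
      intro a b hab
      rw [Measure.add_apply, hν, φsf.measure_Ioc, g.measure_Ioc, Measure.smul_apply,
        Real.volume_Ioc, smul_eq_mul]
      show ENNReal.ofReal (φ b - φ a) + ENNReal.ofReal (((K:ℝ) * b - φ b) - ((K:ℝ) * a - φ a))
          = (K : ℝ≥0∞) * ENNReal.ofReal (b - a)
      rw [← ENNReal.ofReal_add (by linarith [hφm hab.le])
        (by have h5 := hgmono hab.le; simp only at h5; linarith), ← ENNReal.ofReal_coe_nnreal,
        ← ENNReal.ofReal_mul (by positivity)]
      congr 1
      ring
    have hle : ν ≤ (K : ℝ≥0∞) • (volume : Measure ℝ) := by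
      rw [← hsum]
      exact Measure.le_add_right le_rfl
    have habs : ν ≪ (volume : Measure ℝ) := Measure.absolutelyContinuous_of_le_smul hle
    -- a.e. derivative identity
    have hkey : ∀ᵐ x, ENNReal.ofReal (u * (ν.rnDeriv volume x).toReal)
        = ENNReal.ofReal (μ * ∫ y in Set.Iic x, etaBar η φ y * (1 - J (x - y)) ∂ν) := by
      filter_upwards [φsf.ae_hasDerivAt] with x hx
      exact congrArg ENNReal.ofReal (hG x _ hx)
    have hlhs : (∫⁻ x, ENNReal.ofReal (u * (ν.rnDeriv volume x).toReal))
        = ENNReal.ofReal u := by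
      have h1 : ∀ x : ℝ, ENNReal.ofReal (u * (ν.rnDeriv volume x).toReal)
          = ENNReal.ofReal u * ENNReal.ofReal ((ν.rnDeriv volume x).toReal) := fun x =>
        ENNReal.ofReal_mul hu.le
      simp only [h1]
      rw [lintegral_const_mul' _ _ ENNReal.ofReal_ne_top]
      have h2 : (∫⁻ x, ENNReal.ofReal ((ν.rnDeriv volume x).toReal))
          = ∫⁻ x, ν.rnDeriv volume x := by
        apply lintegral_congr_ae
        filter_upwards [Measure.rnDeriv_lt_top ν volume] with x hx
        rw [ENNReal.ofReal_toReal hx.ne]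
      rw [h2, Measure.lintegral_rnDeriv habs, hνuniv, mul_one]
    -- probability integral transform
    have hφmble : Measurable φ := hφcont.measurable
    have hmap : Measure.map φ ν = (volume : Measure ℝ).restrict (Set.Ioc 0 1) := by
      apply MeasureTheory.Measure.ext_of_Iic
      intro cc
      rw [Measure.map_apply hφmble measurableSet_Iic, Measure.restrict_apply measurableSet_Iic]
      rcases lt_or_ge cc 0 with hcneg | hc
      · have h1 : φ ⁻¹' Set.Iic cc = ∅ := by
          ext y
          simp only [Set.mem_preimage, Set.mem_Iic, Set.mem_empty_iff_false, iff_false, not_le]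
          linarith [hφ0 y]
        have h2 : Set.Iic cc ∩ Set.Ioc 0 1 = ∅ := by
          ext s
          simp only [Set.mem_inter_iff, Set.mem_Iic, Set.mem_Ioc, Set.mem_empty_iff_false,
            iff_false, not_and]
          intro h1s h2s
          linarith
        rw [h1, h2]
        simp
      rcases le_or_gt 1 cc with hc1 | hc1
      · have h1 : φ ⁻¹' Set.Iic cc = Set.univ := by
          ext y
          simp only [Set.mem_preimage, Set.mem_Iic, Set.mem_univ, iff_true]
          exact (hφ1 y).trans hc1
        have h2 : Set.Iic cc ∩ Set.Ioc 0 1 = Set.Ioc 0 1 := by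
          rw [Set.inter_eq_right]
          intro s hs
          exact Set.mem_Iic.2 (hs.2.trans hc1)
        rw [h1, h2, hνuniv, Real.volume_Ioc]
        norm_num
      · have h2 : Set.Iic cc ∩ Set.Ioc 0 1 = Set.Ioc 0 cc := by
          ext s
          simp only [Set.mem_inter_iff, Set.mem_Iic, Set.mem_Ioc]
          constructor
          · rintro ⟨h1s, h2s, h3s⟩
            exact ⟨h2s, h1s⟩
          · rintro ⟨h1s, h2s⟩
            exact ⟨h2s, h1s, by linarith⟩
        rw [h2, Real.volume_Ioc]
        by_cases hSne : (φ ⁻¹' Set.Iic cc).Nonempty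
        · have hSclosed : IsClosed (φ ⁻¹' Set.Iic cc) := IsClosed.preimage hφcont isClosed_Iic
          have hSbdd : BddAbove (φ ⁻¹' Set.Iic cc) := by
            obtain ⟨z, hz⟩ :=
              (Filter.Tendsto.eventually_const_lt hc1 hφtop).exists
            refine ⟨z, fun s hs => ?_⟩
            by_contra hzs
            push_neg at hzs
            have h3 : φ z ≤ φ s := hφm hzs.le
            have h4 : φ s ≤ cc := hs
            linarith
          set x₀ := sSup (φ ⁻¹' Set.Iic cc) with hx₀
          have hx₀S : x₀ ∈ φ ⁻¹' Set.Iic cc := hSclosed.csSup_mem hSne hSbdd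
          have hSeq : φ ⁻¹' Set.Iic cc = Set.Iic x₀ := by
            apply Set.Subset.antisymm
            · intro s hs
              exact le_csSup hSbdd hs
            · intro s hs
              exact Set.mem_preimage.2 (Set.mem_Iic.2 (le_trans (hφm hs) hx₀S))
          have hφx₀ : φ x₀ = cc := by
            refine le_antisymm hx₀S ?_
            by_contra hlt
            push_neg at hlt
            have hev : ∀ᶠ z in 𝓝 x₀, φ z < cc :=
              Filter.Tendsto.eventually_lt_const hlt hφcont.continuousAt
            have hev' : ∀ᶠ z in 𝓝[>] x₀, φ z < cc := hev.filter_mono nhdsWithin_le_nhds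
            obtain ⟨z, hz1, hz2⟩ := (hev'.and self_mem_nhdsWithin).exists
            have h5 : z ∈ φ ⁻¹' Set.Iic cc := Set.mem_preimage.2 (Set.mem_Iic.2 hz1.le)
            have h6 : z ≤ x₀ := le_csSup hSbdd h5
            exact absurd h6 (not_le.2 hz2)
          rw [hSeq, hνIic, hφx₀, sub_zero]
        · rw [Set.not_nonempty_iff_eq_empty.1 hSne]
          have hcc0 : cc = 0 := by
            by_contra hne
            have hccpos : 0 < cc := lt_of_le_of_ne hc (Ne.symm hne)
            obtain ⟨z, hz⟩ := (Filter.Tendsto.eventually_lt_const hccpos hφbot).exists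
            exact hSne ⟨z, Set.mem_preimage.2 (Set.mem_Iic.2 hz.le)⟩
          simp [hcc0]
    have hI : (∫⁻ y, ENNReal.ofReal (η' (φ y)) ∂ν)
        = ENNReal.ofReal (∫ s in (0:ℝ)..1, η s) := by
      have h1 : (∫⁻ y, ENNReal.ofReal (η' (φ y)) ∂ν)
          = ∫⁻ t, ENNReal.ofReal (η' t) ∂(Measure.map φ ν) := by
        rw [lintegral_map hη'cont.measurable.ennreal_ofReal hφmble]
      rw [h1, hmap, ← MeasureTheory.ofReal_integral_eq_lintegral_ofReal
        (hη'cont.integrableOn_Ioc) (Filter.Eventually.of_forall fun s =>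
          hη_nonneg _ (hclamp s))]
      congr 1
      rw [← intervalIntegral.integral_of_le zero_le_one]
      apply intervalIntegral.integral_congr
      intro s hs
      rw [uIcc_of_le zero_le_one] at hs
      exact hη'eq s hs
    -- right-hand side lintegral
    have hrhs : (∫⁻ x, ENNReal.ofReal
          (μ * ∫ y in Set.Iic x, etaBar η φ y * (1 - J (x - y)) ∂ν))
        = ENNReal.ofReal μ * ((∫⁻ y, ENNReal.ofReal (η' (φ y)) ∂ν) * M) := by
      have h1 : ∀ x : ℝ, ENNReal.ofReal
            (μ * ∫ y in Set.Iic x, etaBar η φ y * (1 - J (x - y)) ∂ν)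
          = ENNReal.ofReal μ * ENNReal.ofReal
            (∫ y in Set.Iic x, etaBar η φ y * (1 - J (x - y)) ∂ν) := fun x =>
        ENNReal.ofReal_mul hμ.le
      simp only [h1]
      rw [lintegral_const_mul' _ _ ENNReal.ofReal_ne_top]
      congr 1
      have h2 : ∀ x : ℝ, ENNReal.ofReal
            (∫ y in Set.Iic x, etaBar η φ y * (1 - J (x - y)) ∂ν)
          = ∫⁻ y in Set.Iic x,
              ENNReal.ofReal (η' (φ y)) * ENNReal.ofReal (1 - J (x - y)) ∂ν := by
        intro x
        rw [hGof x]
        exact lintegral_congr fun y => by rw [hEB' y]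
      rw [lintegral_congr h2, hMdef]
      exact tonelli_key J (fun y => η' (φ y)) hJmble
        (hη'cont.measurable.comp hφmble) ν
    -- assemble
    have hfinal : ENNReal.ofReal u
        = ENNReal.ofReal μ * (ENNReal.ofReal (∫ s in (0:ℝ)..1, η s) * M) := by
      calc ENNReal.ofReal u
          = ∫⁻ x, ENNReal.ofReal (u * (ν.rnDeriv volume x).toReal) := hlhs.symm
        _ = ∫⁻ x, ENNReal.ofReal
            (μ * ∫ y in Set.Iic x, etaBar η φ y * (1 - J (x - y)) ∂ν) :=
            lintegral_congr_ae hkey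
        _ = ENNReal.ofReal μ * ((∫⁻ y, ENNReal.ofReal (η' (φ y)) ∂ν) * M) := hrhs
        _ = ENNReal.ofReal μ * (ENNReal.ofReal (∫ s in (0:ℝ)..1, η s) * M) := by rw [hI]
    have hη_int_nonneg : 0 ≤ ∫ s in (0:ℝ)..1, η s :=
      intervalIntegral.integral_nonneg zero_le_one fun s hs => hη_nonneg s hs
    have hm1_nonneg : 0 ≤ ∫ y, y ∂(lsMeasure J) := by
      rw [hm1val]
      exact ENNReal.toReal_nonneg
    have hMval : M = ENNReal.ofReal (∫ y, y ∂(lsMeasure J)) := by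
      rw [hm1val, ENNReal.ofReal_toReal hMne]
    rw [hMval, ← ENNReal.ofReal_mul hη_int_nonneg, ← ENNReal.ofReal_mul hμ.le] at hfinal
    have hreal := (ENNReal.ofReal_eq_ofReal_iff hu.le
      (by positivity)).1 hfinal
    rw [hv, hreal]
    ring
end
end

section
/- Let K ≥ 1 be an integer, η(ν) = (1−ν)^K, J(y) = 1 − e^{−y} for y ≥ 0, and μ = 1, so that v = 1/(K+1). Then for any c ∈ ℝ, the function φ(x) = 1 − (1 + e^{K(x−c)})^{−1/K} is a traveling wave shape: φ is a Lipschitz continuous proper probability distribution function on ℝ, continuously differentiable, and v φ′(x) = ∫_{−∞}^x φ′(y) (1 − φ(y))^K e^{−(x−y)} dy holds for every x ∈ ℝ. -/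
open MeasureTheory Filter Topology

noncomputable section

/-- for `η(ν) = (1−ν)^K`, exponential jump sizes `J(y) = 1 − e^{−y}`, `μ = 1`
and `v = 1/(K+1)`, the explicit function `φ(x) = 1 − (1 + e^{K(x−c)})^{−1/K}` is a traveling
wave shape: it is a Lipschitz continuous proper probability distribution function,
continuously differentiable, and satisfies
`v φ′(x) = ∫_{−∞}^x φ′(y) (1 − φ(y))^K e^{−(x−y)} dy` for every `x`. -/
theorem explicit_traveling_wave_exponential
    (K : ℕ) (hK : 1 ≤ K) (c : ℝ) (φ : ℝ → ℝ)
    (hφdef : ∀ x : ℝ, φ x = 1 - (1 + Real.exp ((K : ℝ) * (x - c))) ^ (-(1 : ℝ) / (K : ℝ))) :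
    (∃ L : NNReal, LipschitzWith L φ) ∧ IsPDF φ ∧
      (∀ x, DifferentiableAt ℝ φ x) ∧ Continuous (deriv φ) ∧
      ∀ x : ℝ, (1 / ((K : ℝ) + 1)) * deriv φ x =
        ∫ y in Set.Iic x, deriv φ y * (1 - φ y) ^ K * Real.exp (-(x - y)) := by
  have hφ : φ = fun x : ℝ =>
      1 - (1 + Real.exp ((K : ℝ) * (x - c))) ^ (-(1 : ℝ) / (K : ℝ)) := funext hφdef
  subst hφ
  set r : ℝ := -(1 : ℝ) / (K : ℝ) with hrdef
  have hK0 : (0 : ℝ) < (K : ℝ) := by exact_mod_cast hK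
  have hKne : (K : ℝ) ≠ 0 := ne_of_gt hK0
  have hrK : r * (K : ℝ) = -1 := by rw [hrdef, div_mul_cancel₀ _ hKne]
  have hrneg : r ≤ 0 := by
    rw [hrdef]
    apply div_nonpos_of_nonpos_of_nonneg <;> simp [hK0.le]
  -- abbreviations
  set E : ℝ → ℝ := fun y => Real.exp ((K : ℝ) * (y - c)) with hEdef
  set g : ℝ → ℝ := fun y => 1 + E y with hgdef
  set ψ : ℝ → ℝ := fun y => E y * g y ^ (r - 1) with hψdef
  have hEpos : ∀ y, 0 < E y := fun y => Real.exp_pos _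
  have hg1 : ∀ y, 1 ≤ g y := fun y => by
    simp only [hgdef]; nlinarith [hEpos y]
  have hgpos : ∀ y, 0 < g y := fun y => lt_of_lt_of_le one_pos (hg1 y)
  have hgne : ∀ y, g y ≠ 0 := fun y => ne_of_gt (hgpos y)
  have hEg : ∀ y, E y ≤ g y := fun y => by simp only [hgdef]; nlinarith
  -- derivative of E and g
  have hE' : ∀ y, HasDerivAt E (E y * ((K : ℝ) * 1)) y := fun y =>
    (((hasDerivAt_id y).sub_const c).const_mul (K : ℝ)).exp
  have hg' : ∀ y, HasDerivAt g (E y * ((K : ℝ) * 1)) y := fun y =>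
    (hE' y).const_add 1
  -- derivative of φ
  have key : ∀ x, HasDerivAt
      (fun x : ℝ => 1 - (1 + Real.exp ((K : ℝ) * (x - c))) ^ r) (ψ x) x := by
    intro x
    have h1 : HasDerivAt (fun y => g y ^ r)
        (E x * ((K : ℝ) * 1) * r * g x ^ (r - 1)) x :=
      (hg' x).rpow_const (Or.inl (hgne x))
    have h2 := h1.const_sub 1
    have h3 : ψ x = -(E x * ((K : ℝ) * 1) * r * g x ^ (r - 1)) := by
      simp only [hψdef]
      linear_combination (E x * g x ^ (r - 1)) * hrK
    rw [h3]
    exact h2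
  have hderivEq : deriv (fun x : ℝ =>
      1 - (1 + Real.exp ((K : ℝ) * (x - c))) ^ r) = ψ := funext fun x => (key x).deriv
  have hdiff : ∀ x, DifferentiableAt ℝ
      (fun x : ℝ => 1 - (1 + Real.exp ((K : ℝ) * (x - c))) ^ r) x :=
    fun x => (key x).differentiableAt
  -- continuity facts
  have hEcont : Continuous E := by fun_prop
  have hgcont : Continuous g := by fun_prop
  have hψcont : Continuous ψ := by
    apply hEcont.mul
    exact hgcont.rpow_const fun y => Or.inl (hgne y)
  -- bounds on ψ
  have hψnonneg : ∀ y, 0 ≤ ψ y := fun y => by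
    simp only [hψdef]
    positivity
  have hrpow1 : ∀ y, g y ^ (r - 1) = g y ^ (r - 2) * g y := fun y => by
    rw [show r - 1 = (r - 2) + 1 by ring, Real.rpow_add_one (hgne y)]
  have hψle : ∀ y, ψ y ≤ 1 := by
    intro y
    have h1 : g y ^ r ≤ 1 := Real.rpow_le_one_of_one_le_of_nonpos (hg1 y) hrneg
    have h2 : g y ^ (r - 1) = g y ^ r / g y := by
      rw [show r - 1 = r + (-1) by ring, Real.rpow_add (hgpos y), Real.rpow_neg_one]
      ring
    simp only [hψdef]
    rw [h2]
    rw [mul_div_assoc', div_le_one (hgpos y)]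
    calc E y * g y ^ r ≤ E y * 1 := by
          apply mul_le_mul_of_nonneg_left h1 (hEpos y).le
      _ = E y := mul_one _
      _ ≤ g y := hEg y
  refine ⟨⟨1, ?_⟩, ⟨?_, ?_, ?_, ?_⟩, hdiff, ?_, ?_⟩
  · -- Lipschitz
    apply lipschitzWith_of_nnnorm_deriv_le (fun x => hdiff x)
    intro x
    rw [← NNReal.coe_le_coe, coe_nnnorm, NNReal.coe_one, hderivEq, Real.norm_eq_abs,
      abs_of_nonneg (hψnonneg x)]
    exact hψle x
  · -- Monotone
    apply monotone_of_deriv_nonneg (fun x => hdiff x)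
    intro x
    rw [hderivEq]
    exact hψnonneg x
  · -- right continuity
    intro x
    exact ((hdiff x).continuousAt).continuousWithinAt
  · -- limit at -∞
    have h1 : Tendsto (fun x : ℝ => (K : ℝ) * (x - c)) atBot atBot := by
      apply Tendsto.const_mul_atBot hK0
      simpa [sub_eq_add_neg] using tendsto_atBot_add_const_right atBot (-c) tendsto_id
    have h2 : Tendsto E atBot (𝓝 0) := Real.tendsto_exp_atBot.comp h1
    have h3 : Tendsto g atBot (𝓝 1) := by
      have := h2.const_add (1 : ℝ)
      simpa using this
    have h4 : ContinuousAt (fun t : ℝ => t ^ r) 1 :=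
      Real.continuousAt_rpow_const 1 r (Or.inl one_ne_zero)
    have h5 : Tendsto (fun x => g x ^ r) atBot (𝓝 (1 : ℝ)) := by
      have := h4.tendsto.comp h3
      simpa [Real.one_rpow, Function.comp_def] using this
    have h6 := h5.const_sub (1 : ℝ)
    simpa using h6
  · -- limit at +∞
    have h1 : Tendsto (fun x : ℝ => (K : ℝ) * (x - c)) atTop atTop := by
      apply Tendsto.const_mul_atTop hK0
      simpa [sub_eq_add_neg] using tendsto_atTop_add_const_right atTop (-c) tendsto_id
    have h2 : Tendsto E atTop atTop := Real.tendsto_exp_atTop.comp h1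
    have h3 : Tendsto g atTop atTop := by
      simpa [hgdef] using tendsto_atTop_add_const_left atTop (1 : ℝ) h2
    have h4 : Tendsto (fun t : ℝ => t ^ r) atTop (𝓝 0) := by
      have : r = -(1 / (K : ℝ)) := by rw [hrdef]; ring
      rw [this]
      exact tendsto_rpow_neg_atTop (by positivity)
    have h5 : Tendsto (fun x => g x ^ r) atTop (𝓝 0) := h4.comp h3
    have h6 := h5.const_sub (1 : ℝ)
    simpa using h6
  · -- continuity of deriv
    rw [hderivEq]; exact hψcont
  · -- the integral equation
    intro x
    rw [hderivEq]
    -- the integrand equals W y := exp (y - x) * (E y * g y ^ (r - 2))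
    set W : ℝ → ℝ := fun y => Real.exp (y - x) * (E y * g y ^ (r - 2)) with hWdef
    have hpowK : ∀ y, (g y ^ r) ^ K = (g y)⁻¹ := by
      intro y
      rw [← Real.rpow_natCast (g y ^ r) K, ← Real.rpow_mul (hgpos y).le, hrK,
        Real.rpow_neg_one]
    have hinteq : ∀ y, ψ y * (1 - (1 - (1 + Real.exp ((K : ℝ) * (y - c))) ^ r)) ^ K *
        Real.exp (-(x - y)) = W y := by
      intro y
      have h1 : (1 - (1 - (1 + Real.exp ((K : ℝ) * (y - c))) ^ r)) = g y ^ r := by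
        simp [hgdef, hEdef]
      rw [h1, hpowK y]
      have h2 : Real.exp (-(x - y)) = Real.exp (y - x) := by ring_nf
      rw [h2]
      simp only [hψdef, hWdef, hrpow1 y]
      field_simp
      ring_nf
      rw [mul_inv_cancel_right₀ (hgne y)]
    -- antiderivative
    set F : ℝ → ℝ := fun y => (1 / ((K : ℝ) + 1)) * (Real.exp (y - x) * ψ y) with hFdef
    have hF' : ∀ y, HasDerivAt F (W y) y := by
      intro y
      have hu : HasDerivAt (fun y : ℝ => Real.exp (y - x)) (Real.exp (y - x)) y := by
        simpa using ((hasDerivAt_id y).sub_const x).exp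
      have hpw : HasDerivAt (fun y => g y ^ (r - 1))
          (E y * ((K : ℝ) * 1) * (r - 1) * g y ^ (r - 1 - 1)) y :=
        (hg' y).rpow_const (Or.inl (hgne y))
      have hψ' : HasDerivAt ψ
          (E y * ((K : ℝ) * 1) * g y ^ (r - 1) +
            E y * (E y * ((K : ℝ) * 1) * (r - 1) * g y ^ (r - 1 - 1))) y :=
        (hE' y).mul hpw
      have hFy : HasDerivAt F ((1 / ((K : ℝ) + 1)) *
          (Real.exp (y - x) * ψ y + Real.exp (y - x) *
            (E y * ((K : ℝ) * 1) * g y ^ (r - 1) +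
              E y * (E y * ((K : ℝ) * 1) * (r - 1) * g y ^ (r - 1 - 1))))) y :=
        (hu.mul hψ').const_mul _
      convert hFy using 1
      -- algebraic identity
      have e1 : g y ^ (r - 1 - 1) = g y ^ (r - 2) := by
        rw [show r - 1 - 1 = r - 2 by ring]
      have e2 : g y ^ (r - 1) = g y ^ (r - 2) * g y := hrpow1 y
      have hK1 : (K : ℝ) + 1 ≠ 0 := by positivity
      rw [hWdef]
      simp only [hψdef, e1, e2, mul_one]
      have hgy : g y = 1 + E y := rfl
      rw [hgy, hrdef]
      field_simp
      ring
    -- nonnegativity and bound for W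
    have hWnonneg : ∀ y, 0 ≤ W y := fun y => by
      rw [hWdef]; positivity
    have hWle : ∀ y, W y ≤ Real.exp (y - x) := by
      intro y
      rw [hWdef]
      have h2 : E y * g y ^ (r - 2) = ψ y / g y := by
        simp only [hψdef, hrpow1 y]
        field_simp
        ring_nf
        rw [mul_inv_cancel_right₀ (hgne y)]
      calc Real.exp (y - x) * (E y * g y ^ (r - 2))
          = Real.exp (y - x) * (ψ y / g y) := by rw [h2]
        _ ≤ Real.exp (y - x) * 1 := by
            apply mul_le_mul_of_nonneg_left _ (Real.exp_pos _).le
            rw [div_le_one (hgpos y)]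
            calc ψ y ≤ 1 := hψle y
              _ ≤ g y := hg1 y
        _ = Real.exp (y - x) := mul_one _
    -- integrability of W on Iic x
    have hWcont : Continuous W := by
      apply (Real.continuous_exp.comp (by fun_prop)).mul
      exact hEcont.mul (hgcont.rpow_const fun y => Or.inl (hgne y))
    have hmaj : IntegrableOn (fun y : ℝ => Real.exp (y - x)) (Set.Iic x) := by
      have h1 : IntegrableOn (fun y : ℝ => Real.exp y / Real.exp x) (Set.Iic x) :=
        (integrableOn_exp_Iic x).div_const _
      apply h1.congr_fun _ measurableSet_Iic
      intro y _
      simp [Real.exp_sub]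
    have hWint : IntegrableOn W (Set.Iic x) := by
      apply MeasureTheory.Integrable.mono hmaj (hWcont.aestronglyMeasurable.restrict)
      filter_upwards with y
      rw [Real.norm_eq_abs, Real.norm_eq_abs, abs_of_nonneg (hWnonneg y),
        abs_of_nonneg (Real.exp_pos _).le]
      exact hWle y
    -- limit of F at -∞
    have hFbot : Tendsto F atBot (𝓝 0) := by
      apply squeeze_zero (fun y => by rw [hFdef]; positivity)
        (g := fun y => (1 / ((K : ℝ) + 1)) * Real.exp (y - x))
      · intro y
        rw [hFdef]
        apply mul_le_mul_of_nonneg_left _ (by positivity)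
        calc Real.exp (y - x) * ψ y ≤ Real.exp (y - x) * 1 :=
              mul_le_mul_of_nonneg_left (hψle y) (Real.exp_pos _).le
          _ = Real.exp (y - x) := mul_one _
      · have h1 : Tendsto (fun y : ℝ => y - x) atBot atBot := by
          simpa [sub_eq_add_neg] using tendsto_atBot_add_const_right atBot (-x) tendsto_id
        have h2 : Tendsto (fun y : ℝ => Real.exp (y - x)) atBot (𝓝 0) :=
          Real.tendsto_exp_atBot.comp h1
        simpa using h2.const_mul (1 / ((K : ℝ) + 1))
    -- conclude
    have hint : ∫ y in Set.Iic x, W y = F x - 0 :=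
      integral_Iic_of_hasDerivAt_of_tendsto' (fun y _ => hF' y) hWint hFbot
    have hrhs : (∫ y in Set.Iic x,
        ψ y * (1 - (1 - (1 + Real.exp ((K : ℝ) * (y - c))) ^ r)) ^ K *
          Real.exp (-(x - y))) = ∫ y in Set.Iic x, W y := by
      apply setIntegral_congr_fun measurableSet_Iic
      intro y _
      exact hinteq y
    rw [hrhs, hint, hFdef]
    simp
end
end

section
/- Assume μ = 1 and J(y) = 1 − e^{−y} for y ≥ 0, so J̄(x−y) = e^{−(x−y)}, and let v = ∫₀¹ η(ν) dν. If φ is a continuously differentiable Lipschitz proper probability distribution function on ℝ satisfying v φ′(x) = ∫_{−∞}^x φ′(y) η(φ(y)) e^{−(x−y)} dy for every x ∈ ℝ, then φ′ is differentiable on ℝ and φ satisfies the ordinary differential equation v (φ″(x) + φ′(x)) = φ′(x) η(φ(x)) for every x ∈ ℝ. -/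
open MeasureTheory Filter Topology

noncomputable section

/-- with `μ = 1` and exponential jump sizes `J(y) = 1 − e^{−y}`, any
continuously differentiable Lipschitz proper probability distribution function satisfying
the traveling-wave integral equation satisfies the ODE
`v (φ″(x) + φ′(x)) = φ′(x) η(φ(x))` for every `x`. -/
theorem traveling_wave_ode_exponential
    (η : ℝ → ℝ) (hη_cont : ContinuousOn η (Set.Icc 0 1))
    (hη_anti : StrictAntiOn η (Set.Icc 0 1)) (hη0 : η 0 = 1) (hη1 : η 1 = 0)
    (v : ℝ) (hv : v = ∫ ν in (0:ℝ)..1, η ν)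
    (φ : ℝ → ℝ) (hφ : IsPDF φ) (hlip : ∃ K : NNReal, LipschitzWith K φ)
    (hdiff : ∀ x, DifferentiableAt ℝ φ x) (hcont : Continuous (deriv φ))
    (heq : ∀ x : ℝ, v * deriv φ x
      = ∫ y in Set.Iic x, deriv φ y * η (φ y) * Real.exp (-(x - y))) :
    ∀ x : ℝ, DifferentiableAt ℝ (deriv φ) x ∧
      v * (deriv (deriv φ) x + deriv φ x) = deriv φ x * η (φ x) := by
  obtain ⟨hmono, -, hbot, htop⟩ := hφ
  obtain ⟨K, hK⟩ := hlip
  -- range of φ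
  have hφ01 : ∀ x, φ x ∈ Set.Icc (0:ℝ) 1 := by
    intro x
    constructor
    · exact le_of_tendsto hbot (eventually_atBot.2 ⟨x, fun y hy => hmono hy⟩)
    · exact ge_of_tendsto htop (eventually_atTop.2 ⟨x, fun y hy => hmono hy⟩)
  -- v > 0
  have hvpos : 0 < v := by
    rw [hv]
    apply intervalIntegral.intervalIntegral_pos_of_pos_on
    · exact ContinuousOn.intervalIntegrable
        ((Set.uIcc_of_le (by norm_num : (0:ℝ) ≤ 1)).symm ▸ hη_cont)
    · intro t ht
      have := hη_anti (Set.mem_Icc.2 ⟨ht.1.le, ht.2.le⟩) (Set.mem_Icc.2 ⟨zero_le_one, le_rfl⟩)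
        ht.2
      rwa [hη1] at this
    · norm_num
  have hvne : v ≠ 0 := ne_of_gt hvpos
  have hφcont : Continuous φ := hK.continuous
  -- bound on deriv φ
  have hderiv_bd : ∀ x, |deriv φ x| ≤ (K : ℝ) := by
    intro x
    have h1 : ‖fderiv ℝ φ x‖ ≤ (K : ℝ) := norm_fderiv_le_of_lipschitz ℝ hK
    have h2 : deriv φ x = fderiv ℝ φ x 1 := by rw [← fderiv_apply_one_eq_deriv]
    calc |deriv φ x| = ‖fderiv ℝ φ x 1‖ := by rw [h2]; rfl
      _ ≤ ‖fderiv ℝ φ x‖ * ‖(1:ℝ)‖ := (fderiv ℝ φ x).le_opNorm 1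
      _ ≤ (K : ℝ) := by simpa using h1
  -- η(φ y) ∈ [0,1]
  have hηφ_bd : ∀ y, η (φ y) ∈ Set.Icc (0:ℝ) 1 := by
    intro y
    constructor
    · rcases eq_or_lt_of_le (hφ01 y).2 with h | h
      · rw [h, hη1]
      · have := hη_anti (hφ01 y) (Set.mem_Icc.2 ⟨zero_le_one, le_rfl⟩) h
        rw [hη1] at this; exact this.le
    · rcases eq_or_lt_of_le (hφ01 y).1 with h | h
      · rw [← h, hη0]
      · have := hη_anti (Set.mem_Icc.2 ⟨le_rfl, zero_le_one⟩) (hφ01 y) h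
        rw [hη0] at this; exact this.le
  -- the kernel function
  set h : ℝ → ℝ := fun y => deriv φ y * η (φ y) * Real.exp y with hh
  have hηφcont : Continuous fun y => η (φ y) :=
    hη_cont.comp_continuous hφcont hφ01
  have hconth : Continuous h := (hcont.mul hηφcont).mul Real.continuous_exp
  have hint : ∀ x, IntegrableOn h (Set.Iic x) := by
    intro x
    apply Integrable.mono' ((integrableOn_exp_Iic x).const_mul (K : ℝ))
    · exact hconth.aestronglyMeasurable.restrict
    · refine ae_of_all _ fun y => ?_
      have h1 : |η (φ y)| ≤ 1 := abs_le.2 ⟨by linarith [(hηφ_bd y).1], (hηφ_bd y).2⟩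
      calc ‖h y‖ = |deriv φ y| * |η (φ y)| * Real.exp y := by
            simp [hh, abs_mul, abs_of_pos (Real.exp_pos y)]
        _ ≤ (K : ℝ) * 1 * Real.exp y := by
            apply mul_le_mul_of_nonneg_right _ (Real.exp_pos y).le
            exact mul_le_mul (hderiv_bd y) h1 (abs_nonneg _) K.2
        _ = (K : ℝ) * Real.exp y := by ring
  set G : ℝ → ℝ := fun x => ∫ y in Set.Iic x, h y with hG
  -- rewrite heq
  have heq' : ∀ x, v * deriv φ x = Real.exp (-x) * G x := by
    intro x
    rw [heq x, hG]
    rw [← integral_const_mul]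
    congr 1
    ext y
    rw [hh]
    simp only []
    rw [show -(x - y) = y + -x by ring, Real.exp_add]
    ring
  -- G has derivative h x
  have hGderiv : ∀ x, HasDerivAt G (h x) x := by
    intro x
    have key : ∀ z, G z = G 0 + ∫ y in (0:ℝ)..z, h y := by
      intro z
      rw [← intervalIntegral.integral_Iic_sub_Iic (hint 0) (hint z)]
      ring
    have hd : HasDerivAt (fun z => G 0 + ∫ y in (0:ℝ)..z, h y) (h x) x := by
      apply HasDerivAt.const_add
      exact intervalIntegral.integral_hasDerivAt_right
        (hconth.intervalIntegrable 0 x)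
        hconth.aestronglyMeasurable.stronglyMeasurableAtFilter
        hconth.continuousAt
    exact hd.congr_of_eventuallyEq (Eventually.of_forall key)
  -- deriv φ as explicit function
  have hφ'eq : deriv φ = fun x => Real.exp (-x) * G x / v := by
    funext x
    field_simp
    rw [mul_comm, heq' x]
  intro x
  have hpsi : HasDerivAt (fun x => Real.exp (-x) * G x / v)
      ((-Real.exp (-x) * G x + Real.exp (-x) * h x) / v) x := by
    have h1 : HasDerivAt (fun x : ℝ => Real.exp (-x)) (-Real.exp (-x)) x := by
      simpa [Function.comp_def] using (Real.hasDerivAt_exp (-x)).comp x (hasDerivAt_neg x)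
    exact ((h1.mul (hGderiv x)).div_const v).congr_deriv (by ring)
  have hdd : HasDerivAt (deriv φ) ((-Real.exp (-x) * G x + Real.exp (-x) * h x) / v) x := by
    rw [hφ'eq]; exact hpsi
  refine ⟨hdd.differentiableAt, ?_⟩
  rw [hdd.deriv]
  have e1 : Real.exp (-x) * G x = v * deriv φ x := (heq' x).symm
  have e2 : Real.exp (-x) * h x = deriv φ x * η (φ x) := by
    show Real.exp (-x) * (deriv φ x * η (φ x) * Real.exp x) = _
    rw [show Real.exp (-x) * (deriv φ x * η (φ x) * Real.exp x)
        = Real.exp (-x) * Real.exp x * (deriv φ x * η (φ x)) by ring, ← Real.exp_add]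
    simp
  field_simp
  nlinarith [e1, e2]
end
end
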